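/- Let X be a finite set, let k + 1 ≤ |X|, and let f be a polymatroid function on the uniform matroid of rank k, i.e., f : {S ⊆ X : |S| ≤ k} → ℝ with f(∅) = 0, f(A) ≤ f(B) whenever A ⊆ B and |B| ≤ k, and f(A∪{j}) − f(A) ≥ f(B∪{j}) − f(B) whenever A ⊆ B ⊆ X, j ∈ X∖B, and |B∪{j}| ≤ k. Then there exists a polymatroid function g on the uniform matroid of rank k+1 (i.e., g : {S ⊆ X : |S| ≤ k+1} → ℝ with g(∅) = 0, g monotone and submodular on sets of size at most k+1) agreeing with f on all sets of size at most k, if and only if for every A ⊆ X with |A| = k+1, every B ⊂ A with |B| = k, and every a ∈ B: f(B) − f(B∖{a}) ≥ f(B*) − f(A∖{a}), where B* is a k-element subset of A maximizing f among k-element subsets of A. -/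
import Mathlib


open Finset

variable {α : Type*} [DecidableEq α] [Fintype α]

/-- Monotone set function. -/
def SetMonotone (f : Finset α → ℝ) : Prop :=
  ∀ ⦃A B : Finset α⦄, A ⊆ B → f A ≤ f B

/-- Submodular set function. -/
def SetSubmodular (f : Finset α → ℝ) : Prop :=
  ∀ ⦃A B : Finset α⦄, A ⊆ B → ∀ j ∉ B, f (insert j A) - f A ≥ f (insert j B) - f B

/-- Polymatroid set function: monotone, submodular, and `f ∅ = 0`. -/
def PolymatroidFn (f : Finset α → ℝ) : Prop :=
  SetMonotone f ∧ SetSubmodular f ∧ f ∅ = 0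

/-- Hereditary collection of sets. -/
def Hereditary (I : Finset α → Prop) : Prop :=
  ∀ ⦃B⦄, I B → ∀ ⦃A⦄, A ⊆ B → I A

/-- Independence system: nonempty hereditary collection. -/
def IndepSystem (I : Finset α → Prop) : Prop :=
  (∃ S, I S) ∧ Hereditary I

/-- Augmentation property. -/
def Augmentation (I : Finset α → Prop) : Prop :=
  ∀ ⦃A B⦄, I A → I B → A.card < B.card → ∃ j ∈ B, j ∉ A ∧ I (insert j A)

/-- Matroid: independence system with augmentation. -/
def IsMatroid (I : Finset α → Prop) : Prop :=
  IndepSystem I ∧ Augmentation I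

/-- One step of the greedy algorithm: add a feasible element of largest gain. -/
def GreedyStep (I : Finset α → Prop) (f : Finset α → ℝ) (S S' : Finset α) : Prop :=
  ∃ a ∉ S, I (insert a S) ∧ S' = insert a S ∧
    ∀ b ∉ S, I (insert b S) → f (insert b S) ≤ f (insert a S)

/-- Greedy solution: obtained from `∅` by greedy steps, and no further feasible addition. -/
def IsGreedy (I : Finset α → Prop) (f : Finset α → ℝ) (G : Finset α) : Prop :=
  Relation.ReflTransGen (GreedyStep I f) ∅ G ∧ ∀ a ∉ G, ¬ I (insert a G)

/-- Optimal solution: member of the constraint maximizing `f`. -/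
def IsOptimal (I : Finset α → Prop) (f : Finset α → ℝ) (O : Finset α) : Prop :=
  I O ∧ ∀ S, I S → f S ≤ f O

/-- `B` is a basis of `S`: a maximal independent subset of `S`. -/
def IsBasisOf (I : Finset α → Prop) (S B : Finset α) : Prop :=
  B ⊆ S ∧ I B ∧ ∀ ⦃B' : Finset α⦄, I B' → B ⊆ B' → B' ⊆ S → B' = B

/-- Lower rank of `S`: minimum cardinality of a basis of `S`. -/
noncomputable def lr (I : Finset α → Prop) (S : Finset α) : ℕ :=
  sInf {n : ℕ | ∃ B, IsBasisOf I S B ∧ B.card = n}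

/-- Upper rank of `S`: maximum cardinality of a basis of `S`. -/
noncomputable def ur (I : Finset α → Prop) (S : Finset α) : ℕ :=
  sSup {n : ℕ | ∃ B, IsBasisOf I S B ∧ B.card = n}

/-- Rank quotient `q(X, 𝓘)`. -/
noncomputable def rankQuotient (I : Finset α → Prop) : ℝ :=
  sInf {x : ℝ | ∃ S : Finset α, 0 < ur I S ∧ x = (lr I S : ℝ) / (ur I S : ℝ)}

/-- Total curvature `c(f)`. -/
noncomputable def totalCurvature (f : Finset α → ℝ) : ℝ :=
  sSup {x : ℝ | ∃ j : α, f {j} ≠ f ∅ ∧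
    x = 1 - (f Finset.univ - f (Finset.univ.erase j)) / (f {j} - f ∅)}

/-- Partial curvature `b(f)`, over pairs `(j, A)` with `j ∈ A ∈ 𝓘`. -/
noncomputable def partialCurvature (I : Finset α → Prop) (f : Finset α → ℝ) : ℝ :=
  sSup {x : ℝ | ∃ (j : α) (A : Finset α), I A ∧ j ∈ A ∧ f {j} ≠ f ∅ ∧
    x = 1 - (f A - f (A.erase j)) / (f {j} - f ∅)}

/-- Total `k`-batch curvature `c_k`. -/
noncomputable def batchCurvature (f : Finset α → ℝ) (k : ℕ) : ℝ :=
  sSup {x : ℝ | ∃ J : Finset α, J.card = k ∧ f J ≠ f ∅ ∧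
    x = 1 - (f Finset.univ - f (Finset.univ \ J)) / (f J - f ∅)}

/-- Polymatroid function defined on a collection `𝓘`. -/
def PolymatroidOn (I : Finset α → Prop) (f : Finset α → ℝ) : Prop :=
  f ∅ = 0 ∧ (∀ ⦃A B : Finset α⦄, A ⊆ B → I B → f A ≤ f B) ∧
    ∀ ⦃A B : Finset α⦄, A ⊆ B → ∀ j ∉ B, I (insert j B) →
      f (insert j A) - f A ≥ f (insert j B) - f B

/-- One step of the batched greedy algorithm: add a feasible batch of size `k`
of largest gain. -/
def BatchStep (I : Finset α → Prop) (f : Finset α → ℝ) (k : ℕ) (S S' : Finset α) : Prop :=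
  ∃ J : Finset α, Disjoint J S ∧ J.card = k ∧ I (S ∪ J) ∧ S' = S ∪ J ∧
    ∀ J' : Finset α, Disjoint J' S → J'.card = k → I (S ∪ J') → f (S ∪ J') ≤ f (S ∪ J)

/-- `k`-batch greedy solution: `l - 1` batches of size `k` followed by one batch of
size `m`. -/
def IsBatchGreedy (I : Finset α → Prop) (f : Finset α → ℝ) (k l m : ℕ)
    (S : Finset α) : Prop :=
  ∃ T : ℕ → Finset α, T 0 = ∅ ∧ (∀ t < l - 1, BatchStep I f k (T t) (T (t + 1))) ∧
    BatchStep I f m (T (l - 1)) S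

/-- A polymatroid function on the uniform matroid of rank `k` extends to a
polymatroid function on the uniform matroid of rank `k + 1` if and only if
`f(B) - f(B∖{a}) ≥ f(B*) - f(A∖{a})` for every `(k+1)`-set `A`, every
`k`-subset `B ⊂ A`, every `a ∈ B`, where `B*` maximizes `f` among `k`-subsets
of `A`. -/
theorem polymatroid_extension_iff {α : Type*} [DecidableEq α] [Fintype α]
    (k : ℕ) (hk : k + 1 ≤ Fintype.card α)
    (f : Finset α → ℝ)
    (hf0 : f ∅ = 0)
    (hfmono : ∀ A B : Finset α, A ⊆ B → B.card ≤ k → f A ≤ f B)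
    (hfsub : ∀ A B : Finset α, A ⊆ B → ∀ j ∉ B, (insert j B).card ≤ k →
      f (insert j A) - f A ≥ f (insert j B) - f B) :
    (∃ g : Finset α → ℝ, g ∅ = 0 ∧
        (∀ A B : Finset α, A ⊆ B → B.card ≤ k + 1 → g A ≤ g B) ∧
        (∀ A B : Finset α, A ⊆ B → ∀ j ∉ B, (insert j B).card ≤ k + 1 →
          g (insert j A) - g A ≥ g (insert j B) - g B) ∧
        (∀ S : Finset α, S.card ≤ k → g S = f S)) ↔
      (∀ A : Finset α, A.card = k + 1 → ∀ B ⊂ A, B.card = k → ∀ a ∈ B,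
        ∀ Bs ⊂ A, Bs.card = k → (∀ B' ⊂ A, B'.card = k → f B' ≤ f Bs) →
          f B - f (B.erase a) ≥ f Bs - f (A.erase a)) := by
  classical
  constructor
  · rintro ⟨g, hg0, hgm, hgs, hgf⟩ A hA B hBA hBk a haB Bs hBsA hBsk hmax
    have haA : a ∈ A := hBA.subset haB
    have h1 := hgs (B.erase a) (A.erase a) (Finset.erase_subset_erase a hBA.subset) a
      (Finset.notMem_erase a _) (by rw [Finset.insert_erase haA, hA])
    rw [Finset.insert_erase haB, Finset.insert_erase haA] at h1
    have e1 : g B = f B := hgf B hBk.le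
    have e2 : g (B.erase a) = f (B.erase a) :=
      hgf _ (le_trans (Finset.card_le_card (Finset.erase_subset a B)) hBk.le)
    have e3 : g (A.erase a) = f (A.erase a) :=
      hgf _ (by rw [Finset.card_erase_of_mem haA, hA]; omega)
    have h2 : f Bs ≤ g A := by
      rw [← hgf Bs hBsk.le]
      exact hgm Bs A hBsA.subset (by rw [hA])
    rw [e1, e2, e3] at h1
    linarith
  · intro h
    have hne : ∀ S : Finset α, ¬ S.card ≤ k → (S.powersetCard k).Nonempty := fun S hS =>
      Finset.powersetCard_nonempty.mpr (le_of_not_ge hS)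
    refine ⟨fun S => if hS : S.card ≤ k then f S else (S.powersetCard k).sup' (hne S hS) f,
      ?_, ?_, ?_, ?_⟩
    case _ =>
      simp only [Finset.card_empty, Nat.zero_le, dif_pos, hf0]
    all_goals
      have hagree : ∀ S : Finset α, S.card ≤ k →
          (if hS : S.card ≤ k then f S else (S.powersetCard k).sup' (hne S hS) f) = f S :=
        fun S hS => dif_pos hS
      have hL1 : ∀ S : Finset α, S.card = k + 1 → ∀ B ⊆ S, B.card = k →
          f B ≤ (if hS : S.card ≤ k then f S else (S.powersetCard k).sup' (hne S hS) f) := by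
        intro S hS B hBS hBk
        rw [dif_neg (by omega)]
        exact Finset.le_sup' f (Finset.mem_powersetCard.mpr ⟨hBS, hBk⟩)
      have hL2 : ∀ S : Finset α, S.card = k + 1 → ∃ Bs, Bs ⊆ S ∧ Bs.card = k ∧
          (if hS : S.card ≤ k then f S else (S.powersetCard k).sup' (hne S hS) f) = f Bs ∧
          ∀ B' ⊆ S, B'.card = k → f B' ≤ f Bs := by
        intro S hS
        have hne' := hne S (by omega)
        obtain ⟨Bs, hmem, heq⟩ := Finset.exists_mem_eq_sup' hne' f
        obtain ⟨hsub, hcard⟩ := Finset.mem_powersetCard.mp hmem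
        refine ⟨Bs, hsub, hcard, by rw [dif_neg (by omega), heq], ?_⟩
        intro B' hB'S hB'k
        rw [← heq]
        exact Finset.le_sup' f (Finset.mem_powersetCard.mpr ⟨hB'S, hB'k⟩)
      beta_reduce
    case _ =>
      -- monotonicity
      intro A B hAB hBc
      beta_reduce
      by_cases hBk : B.card ≤ k
      · rw [hagree A (le_trans (Finset.card_le_card hAB) hBk), hagree B hBk]
        exact hfmono A B hAB hBk
      · have hB1 : B.card = k + 1 := by omega
        by_cases hAk : A.card ≤ k
        · obtain ⟨C, hAC, hCB, hCc⟩ := Finset.exists_subsuperset_card_eq hAB hAk (by omega)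
          rw [hagree A hAk]
          exact le_trans (hfmono A C hAC hCc.le) (hL1 B hB1 C hCB hCc)
        · have : A = B := Finset.eq_of_subset_of_card_le hAB (by omega)
          rw [this]
    case _ =>
      -- submodularity
      intro A B hAB j hj hcard
      beta_reduce
      by_cases hck : (insert j B).card ≤ k
      · have hjA : j ∉ A := fun hx => hj (hAB hx)
        have h1 : (insert j A).card ≤ k :=
          le_trans (Finset.card_le_card (Finset.insert_subset_insert j hAB)) hck
        have h2 : B.card ≤ k := le_trans (Finset.card_le_card (Finset.subset_insert j B)) hck
        rw [hagree _ hck, hagree _ h1, hagree B h2,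
          hagree A (le_trans (Finset.card_le_card hAB) h2)]
        exact hfsub A B hAB j hj hck
      · have hBk : B.card = k := by
          have := Finset.card_insert_of_notMem hj
          omega
        rcases ssubset_or_eq_of_subset hAB with hss | rfl
        · have hAk : A.card < k := by
            have := Finset.card_lt_card hss
            omega
          obtain ⟨b, hbB, hbA⟩ := Finset.exists_of_ssubset hss
          have hjA : j ∉ A := fun hx => hj (hAB hx)
          have hSc : (insert j B).card = k + 1 := by
            rw [Finset.card_insert_of_notMem hj, hBk]
          obtain ⟨Bs, hBsS, hBsk, hgeq, hmax⟩ := hL2 (insert j B) hSc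
          -- step (i): submodularity within rank k
          have hAerase : A ⊆ B.erase b := Finset.subset_erase.mpr ⟨hAB, hbA⟩
          have hjerase : j ∉ B.erase b := fun hx => hj (Finset.erase_subset b B hx)
          have hceb : (B.erase b).card = k - 1 := by
            rw [Finset.card_erase_of_mem hbB, hBk]
          have hstep1 := hfsub A (B.erase b) hAerase j hjerase
            (by rw [Finset.card_insert_of_notMem hjerase, hceb]; omega)
          -- step (ii): the condition
          have hbj : j ≠ b := by rintro rfl; exact hj hbB
          have herase : (insert j B).erase b = insert j (B.erase b) :=
            Finset.erase_insert_of_ne hbj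
          have hBss : B ⊂ insert j B := Finset.ssubset_insert hj
          have hBsss : Bs ⊂ insert j B := by
            refine Finset.ssubset_iff_subset_ne.mpr ⟨hBsS, fun hx => ?_⟩
            rw [hx, hSc] at hBsk; omega
          have hstep2 := h (insert j B) hSc B hBss hBk b hbB Bs hBsss hBsk
            (fun B' hB' hB'k => hmax B' hB'.subset hB'k)
          rw [herase] at hstep2
          -- rewrite g values
          have e1 : (insert j A).card ≤ k := by
            rw [Finset.card_insert_of_notMem hjA]; omega
          rw [hgeq, hagree _ e1, hagree A (by omega), hagree B hBk.le]
          -- combine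
          have hmono := hfmono (B.erase b) B (Finset.erase_subset b B) hBk.le
          linarith
        · exact le_refl _
    case _ =>
      exact fun S hS => hagree S hS
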